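/- Let U be an n×n matrix with ‖U‖ ≤ 1 (e.g., a submatrix of a unitary), s_1,…,s_k positive integers summing to n, and A the n×n matrix with s_j copies of the j-th column of U restricted appropriately. Then |Per(A)|² / (s_1!⋯s_k!) ≤ (s_1!⋯s_k!)/(s_1^{s_1}⋯s_k^{s_k}). -/

import Mathlib

open Finset

/-- The operator (spectral) 2-norm of a complex matrix. -/
noncomputable def opNorm {m k : ℕ} (A : Matrix (Fin m) (Fin k) ℂ) : ℝ :=
  ‖LinearMap.toContinuousLinearMap (Matrix.toEuclideanLin A)‖

/-- Permutations with prescribed fiber behaviour correspond to families of bijections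
between fibers. -/
def permFiberEquiv {n k : ℕ} (c f : Fin n → Fin k) :
    {σ : Equiv.Perm (Fin n) // c ∘ σ = f} ≃ ∀ j, {i // f i = j} ≃ {i // c i = j} where
  toFun := fun ⟨σ, h⟩ j => σ.subtypeEquiv fun a => by
    rw [show c (σ a) = f a from congrFun h a]
  invFun := fun e => ⟨Equiv.ofFiberEquiv e, funext fun a => Equiv.ofFiberEquiv_map e a⟩
  left_inv := fun ⟨σ, h⟩ => Subtype.ext (Equiv.ext fun a => rfl)
  right_inv := fun e => by
    funext j
    ext x
    obtain ⟨a, ha⟩ := x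
    subst ha
    rfl

lemma count_perm_fiber {n k : ℕ} (c f : Fin n → Fin k) (s : Fin k → ℕ)
    (hc : ∀ j, (univ.filter fun i => c i = j).card = s j)
    (hf : ∀ j, (univ.filter fun i => f i = j).card = s j) :
    (univ.filter fun σ : Equiv.Perm (Fin n) => c ∘ σ = f).card = ∏ j, (s j).factorial := by
  have h1 : (univ.filter fun σ : Equiv.Perm (Fin n) => c ∘ σ = f).card
      = Fintype.card {σ : Equiv.Perm (Fin n) // c ∘ σ = f} := (Fintype.card_subtype _).symm
  rw [h1, Fintype.card_congr (permFiberEquiv c f), Fintype.card_pi]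
  refine Finset.prod_congr rfl fun j _ => ?_
  have hcf : Fintype.card {i // f i = j} = s j := by
    rw [Fintype.card_subtype]; exact hf j
  have hcc : Fintype.card {i // c i = j} = s j := by
    rw [Fintype.card_subtype]; exact hc j
  rw [Fintype.card_equiv (Fintype.equivOfCardEq (hcf.trans hcc.symm)), hcf]

lemma filter_comp_perm_card {n k : ℕ} (c : Fin n → Fin k) (σ : Equiv.Perm (Fin n)) (j : Fin k) :
    (univ.filter fun i => c (σ i) = j).card = (univ.filter fun i => c i = j).card := by
  rw [← Fintype.card_subtype, ← Fintype.card_subtype]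
  exact Fintype.card_congr (σ.subtypeEquiv fun a => Iff.rfl)

lemma per_group {n k : ℕ} (c : Fin n → Fin k) (s : Fin k → ℕ)
    (hc : ∀ j, (univ.filter fun i => c i = j).card = s j)
    (B : Matrix (Fin n) (Fin k) ℂ) :
    ∑ σ : Equiv.Perm (Fin n), ∏ i, B i (c (σ i))
      = (∏ j, (s j).factorial : ℕ) *
        ∑ f ∈ univ.filter (fun f : Fin n → Fin k =>
            ∀ j, (univ.filter fun i => f i = j).card = s j), ∏ i, B i (f i) := by
  classical
  rw [← Finset.sum_fiberwise univ (fun σ : Equiv.Perm (Fin n) => c ∘ σ)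
    (fun σ => ∏ i, B i (c (σ i)))]
  rw [Finset.mul_sum, Finset.sum_filter]
  refine Finset.sum_congr rfl fun f _ => ?_
  have hval : ∀ σ ∈ univ.filter (fun σ : Equiv.Perm (Fin n) => c ∘ σ = f),
      (∏ i, B i (c (σ i))) = ∏ i, B i (f i) := by
    intro σ hσ
    have h := (mem_filter.1 hσ).2
    exact Finset.prod_congr rfl fun i _ => by rw [show c (σ i) = f i from congrFun h i]
  rw [Finset.sum_congr rfl hval, Finset.sum_const]
  by_cases hf : ∀ j, (univ.filter fun i => f i = j).card = s j
  · rw [if_pos hf, count_perm_fiber c f s hc hf, nsmul_eq_mul]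
  · rw [if_neg hf]
    have : (univ.filter fun σ : Equiv.Perm (Fin n) => c ∘ σ = f) = ∅ := by
      rw [Finset.filter_eq_empty_iff]
      intro σ _ hcf
      refine hf fun j => ?_
      subst hcf
      simpa using (filter_comp_perm_card c σ j).trans (hc j)
    rw [this]; simp

lemma orth {n : ℕ} {ζ : ℂ} (hζ : IsPrimitiveRoot ζ (n+1)) (m s : ℕ) (hm : m ≤ n) (hs : s ≤ n) :
    ∑ u : Fin (n+1), ζ ^ ((u:ℕ) * m) * (ζ ^ ((u:ℕ) * s))⁻¹
      = if m = s then ((n+1 : ℕ) : ℂ) else 0 := by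
  have hζN : ζ ^ (n+1) = 1 := hζ.pow_eq_one
  have hζ0 : ζ ≠ 0 := fun h => by simp [h, pow_succ] at hζN
  set w : ℂ := ζ ^ m * (ζ ^ s)⁻¹ with hw
  have hterm : ∀ u : Fin (n+1), ζ ^ ((u:ℕ) * m) * (ζ ^ ((u:ℕ) * s))⁻¹ = w ^ (u:ℕ) := by
    intro u
    rw [hw, mul_pow, inv_pow, ← pow_mul, ← pow_mul, mul_comm m (u:ℕ), mul_comm s (u:ℕ)]
  rw [Finset.sum_congr rfl fun u _ => hterm u]
  by_cases hms : m = s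
  · subst hms
    have : w = 1 := mul_inv_cancel₀ (pow_ne_zero _ hζ0)
    simp [this]
  · rw [if_neg hms]
    have hw1 : w ≠ 1 := by
      intro h
      rw [hw, mul_inv_eq_one₀ (pow_ne_zero _ hζ0)] at h
      exact hms (hζ.pow_inj (Nat.lt_succ_of_le hm) (Nat.lt_succ_of_le hs) h)
    have hwN : w ^ (n+1) = 1 := by
      have h1 : (ζ ^ m) ^ (n+1) = 1 := by rw [← pow_mul, mul_comm, pow_mul, hζN, one_pow]
      have h2 : (ζ ^ s) ^ (n+1) = 1 := by rw [← pow_mul, mul_comm, pow_mul, hζN, one_pow]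
      rw [hw, mul_pow, h1, inv_pow, h2, inv_one, mul_one]
    rw [Fin.sum_univ_eq_sum_range (fun u => w ^ u), geom_sum_eq hw1, hwN, sub_self, zero_div]

lemma prod_comp_fiber {n k : ℕ} (f : Fin n → Fin k) (g : Fin k → ℂ) :
    ∏ i, g (f i) = ∏ j, g j ^ (univ.filter fun i => f i = j).card := by
  rw [← Finset.prod_fiberwise_of_maps_to' (fun i _ => Finset.mem_univ (f i)) g]
  exact Finset.prod_congr rfl fun j _ => Finset.prod_const (g j)

lemma fourierIdent {n k : ℕ} {ζ : ℂ} (hζ : IsPrimitiveRoot ζ (n+1)) (s : Fin k → ℕ)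
    (hs : ∀ j, s j ≤ n) (B : Matrix (Fin n) (Fin k) ℂ) (r : Fin k → ℂ) :
    ∑ t : Fin k → Fin (n+1),
        (∏ i, ∑ j, B i j * (r j * ζ ^ (t j : ℕ))) * ∏ j, (ζ ^ ((t j : ℕ) * s j))⁻¹
      = (((n+1:ℕ) : ℂ)) ^ k * (∏ j, r j ^ s j) *
        ∑ f ∈ univ.filter (fun f : Fin n → Fin k =>
            ∀ j, (univ.filter fun i => f i = j).card = s j), ∏ i, B i (f i) := by
  classical
  have expand : ∀ t : Fin k → Fin (n+1),
      (∏ i, ∑ j, B i j * (r j * ζ ^ (t j : ℕ)))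
        = ∑ f : Fin n → Fin k, (∏ i, B i (f i)) *
            ∏ j, ((r j * ζ ^ (t j : ℕ)) ^ (univ.filter fun i => f i = j).card) := by
    intro t
    rw [Finset.prod_univ_sum (fun _ => (univ : Finset (Fin k)))
      (fun i j => B i j * (r j * ζ ^ (t j : ℕ)))]
    rw [Fintype.piFinset_univ]
    refine Finset.sum_congr rfl fun f _ => ?_
    rw [Finset.prod_mul_distrib, prod_comp_fiber f (fun j => r j * ζ ^ (t j : ℕ))]
  calc
    ∑ t : Fin k → Fin (n+1),
        (∏ i, ∑ j, B i j * (r j * ζ ^ (t j : ℕ))) * ∏ j, (ζ ^ ((t j : ℕ) * s j))⁻¹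
      = ∑ f : Fin n → Fin k, (∏ i, B i (f i)) *
          ∑ t : Fin k → Fin (n+1), ∏ j,
            ((r j * ζ ^ (t j : ℕ)) ^ (univ.filter fun i => f i = j).card
              * (ζ ^ ((t j : ℕ) * s j))⁻¹) := by
        rw [Finset.sum_congr rfl fun t _ => by
          rw [expand t, Finset.sum_mul]]
        rw [Finset.sum_comm]
        refine Finset.sum_congr rfl fun f _ => ?_
        rw [Finset.mul_sum]
        refine Finset.sum_congr rfl fun t _ => ?_
        rw [mul_assoc, ← Finset.prod_mul_distrib]
    _ = ∑ f : Fin n → Fin k, (∏ i, B i (f i)) *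
          ∏ j, ∑ u : Fin (n+1),
            ((r j * ζ ^ (u : ℕ)) ^ (univ.filter fun i => f i = j).card
              * (ζ ^ ((u : ℕ) * s j))⁻¹) := by
        refine Finset.sum_congr rfl fun f _ => ?_
        congr 1
        rw [Finset.prod_univ_sum (fun _ => (univ : Finset (Fin (n+1))))
          (fun j u => (r j * ζ ^ (u : ℕ)) ^ (univ.filter fun i => f i = j).card
              * (ζ ^ ((u : ℕ) * s j))⁻¹), Fintype.piFinset_univ]
    _ = ∑ f : Fin n → Fin k, (∏ i, B i (f i)) *
          (if (∀ j, (univ.filter fun i => f i = j).card = s j)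
            then (((n+1:ℕ):ℂ)) ^ k * ∏ j, r j ^ s j else 0) := by
        refine Finset.sum_congr rfl fun f _ => ?_
        congr 1
        have inner : ∀ j, ∑ u : Fin (n+1),
            ((r j * ζ ^ (u : ℕ)) ^ (univ.filter fun i => f i = j).card
              * (ζ ^ ((u : ℕ) * s j))⁻¹)
            = r j ^ (univ.filter fun i => f i = j).card *
              (if (univ.filter fun i => f i = j).card = s j then ((n+1:ℕ):ℂ) else 0) := by
          intro j
          have hmle : (univ.filter fun i => f i = j).card ≤ n := by
            calc (univ.filter fun i => f i = j).card ≤ (univ : Finset (Fin n)).card :=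
                  Finset.card_filter_le _ _
              _ = n := by simp
          rw [← orth hζ _ _ hmle (hs j), Finset.mul_sum]
          refine Finset.sum_congr rfl fun u _ => ?_
          rw [mul_pow, ← pow_mul, mul_assoc]
        rw [Finset.prod_congr rfl fun j _ => inner j]
        by_cases hall : ∀ j, (univ.filter fun i => f i = j).card = s j
        · rw [if_pos hall]
          calc ∏ j, (r j ^ (univ.filter fun i => f i = j).card *
                if (univ.filter fun i => f i = j).card = s j then ((n+1:ℕ):ℂ) else 0)
              = ∏ j, (r j ^ s j * ((n+1:ℕ):ℂ)) :=
                Finset.prod_congr rfl fun j _ => by rw [hall j, if_pos rfl]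
            _ = (∏ j, r j ^ s j) * ((n+1:ℕ):ℂ) ^ k := by
                rw [Finset.prod_mul_distrib, Finset.prod_const, Finset.card_univ,
                  Fintype.card_fin]
            _ = ((n+1:ℕ):ℂ) ^ k * ∏ j, r j ^ s j := by ring
        · rw [if_neg hall]
          push_neg at hall
          obtain ⟨j0, hj0⟩ := hall
          exact Finset.prod_eq_zero (Finset.mem_univ j0) (by rw [if_neg hj0, mul_zero])
    _ = (((n+1:ℕ) : ℂ)) ^ k * (∏ j, r j ^ s j) *
        ∑ f ∈ univ.filter (fun f : Fin n → Fin k =>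
            ∀ j, (univ.filter fun i => f i = j).card = s j), ∏ i, B i (f i) := by
        rw [Finset.mul_sum, Finset.sum_filter]
        refine Finset.sum_congr rfl fun f _ => ?_
        by_cases hall : ∀ j, (univ.filter fun i => f i = j).card = s j
        · rw [if_pos hall, if_pos hall]; ring
        · rw [if_neg hall, if_neg hall, mul_zero]

lemma amgm {n : ℕ} (hn : 0 < n) (z : Fin n → ℝ) (hz : ∀ i, 0 ≤ z i)
    (hsum : ∑ i, z i ≤ 1) : ∏ i, z i ≤ ((n:ℝ)⁻¹) ^ n := by
  have hn' : (0:ℝ) < n := by exact_mod_cast hn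
  have h1 : ∏ i, z i ^ ((n:ℝ)⁻¹) ≤ ∑ i, (n:ℝ)⁻¹ * z i := by
    refine Real.geom_mean_le_arith_mean_weighted univ (fun _ => (n:ℝ)⁻¹) z
      (fun i _ => by positivity) ?_ (fun i _ => hz i)
    rw [Finset.sum_const, Finset.card_univ, Fintype.card_fin, nsmul_eq_mul]
    field_simp
  have h2 : ∑ i, (n:ℝ)⁻¹ * z i ≤ (n:ℝ)⁻¹ := by
    rw [← Finset.mul_sum]
    calc (n:ℝ)⁻¹ * ∑ i, z i ≤ (n:ℝ)⁻¹ * 1 :=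
      mul_le_mul_of_nonneg_left hsum (by positivity)
    _ = (n:ℝ)⁻¹ := mul_one _
  have key : ∏ i, z i = (∏ i, z i ^ ((n:ℝ)⁻¹)) ^ n := by
    rw [← Finset.prod_pow]
    refine Finset.prod_congr rfl fun i _ => ?_
    rw [← Real.rpow_natCast (z i ^ ((n:ℝ)⁻¹)) n, ← Real.rpow_mul (hz i),
      inv_mul_cancel₀ (ne_of_gt hn'), Real.rpow_one]
  rw [key]
  exact pow_le_pow_left₀ (Finset.prod_nonneg fun i _ => Real.rpow_nonneg (hz i) _)
    (h1.trans h2) n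

lemma term_bound {n k : ℕ} (hn : 0 < n) (B : Matrix (Fin n) (Fin k) ℂ) (hB : opNorm B ≤ 1)
    (x : Fin k → ℂ) (hx : ∑ j, ‖(x j)‖ ^ 2 ≤ 1) :
    ‖(∏ i, ∑ j, B i j * x j)‖ ^ 2 ≤ ((n:ℝ)⁻¹) ^ n := by
  set y : Fin n → ℂ := B.mulVec x with hy
  have hyi : ∀ i, (∑ j, B i j * x j) = y i := by
    intro i; rw [hy]; rfl
  have hnorm : ∑ i, ‖(y i)‖ ^ 2 ≤ 1 := by
    set X : EuclideanSpace ℂ (Fin k) := (WithLp.equiv 2 _).symm x with hX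
    have hYX : Matrix.toEuclideanLin B X = (WithLp.equiv 2 _).symm y := by
      rw [hX]; rfl
    have hle : ‖Matrix.toEuclideanLin B X‖ ≤ ‖X‖ := by
      have := (LinearMap.toContinuousLinearMap (Matrix.toEuclideanLin B)).le_opNorm X
      calc ‖Matrix.toEuclideanLin B X‖
          = ‖LinearMap.toContinuousLinearMap (Matrix.toEuclideanLin B) X‖ := rfl
        _ ≤ opNorm B * ‖X‖ := this
        _ ≤ 1 * ‖X‖ := mul_le_mul_of_nonneg_right hB (norm_nonneg X)
        _ = ‖X‖ := one_mul _
    rw [hYX] at hle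
    have hny : ‖(WithLp.equiv 2 (Fin n → ℂ)).symm y‖
        = Real.sqrt (∑ i, ‖(y i)‖ ^ 2) := by
      rw [EuclideanSpace.norm_eq]
      congr 1
    have hnx : ‖X‖ = Real.sqrt (∑ j, ‖(x j)‖ ^ 2) := by
      rw [hX, EuclideanSpace.norm_eq]
      congr 1
    rw [hny, hnx] at hle
    have h2 : ∑ i, ‖(y i)‖ ^ 2 ≤ ∑ j, ‖(x j)‖ ^ 2 := by
      have hs1 : (0:ℝ) ≤ ∑ i, ‖(y i)‖ ^ 2 :=
        Finset.sum_nonneg fun i _ => sq_nonneg _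
      have hs2 : (0:ℝ) ≤ ∑ j, ‖(x j)‖ ^ 2 :=
        Finset.sum_nonneg fun j _ => sq_nonneg _
      have := pow_le_pow_left₀ (Real.sqrt_nonneg _) hle 2
      rwa [Real.sq_sqrt hs1, Real.sq_sqrt hs2] at this
    exact h2.trans hx
  rw [Finset.prod_congr rfl fun i _ => hyi i, norm_prod, ← Finset.prod_pow]
  exact amgm hn (fun i => ‖(y i)‖ ^ 2) (fun i => sq_nonneg _) hnorm

/-- **Bound on "bunched" outcome probabilities.**  Let `B` be `n × k` with `‖B‖ ≤ 1`
(e.g. a submatrix of a unitary), `s_1,…,s_k > 0` summing to `n`, and `A` the `n × n`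
matrix with `s_j` copies of column `j` of `B`.  Then the quantum-optical outcome
probability satisfies `|Per(A)|²/(s_1!⋯s_k!) ≤ (s_1!⋯s_k!)/(s_1^{s_1}⋯s_k^{s_k})`. -/
theorem outcome_probability_bound (n k : ℕ) (s : Fin k → ℕ)
    (hpos : ∀ j, 0 < s j) (hsum : ∑ j, s j = n)
    (B : Matrix (Fin n) (Fin k) ℂ) (hB : opNorm B ≤ 1)
    (c : Fin n → Fin k)
    (hc : ∀ j, (Finset.univ.filter fun i => c i = j).card = s j)
    (A : Matrix (Fin n) (Fin n) ℂ) (hA : ∀ i m, A i m = B i (c m)) :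
    ‖(∑ σ : Equiv.Perm (Fin n), ∏ i, A i (σ i))‖ ^ 2
        / ((∏ j, (s j).factorial : ℕ) : ℝ)
      ≤ ((∏ j, (s j).factorial : ℕ) : ℝ) / (∏ j, (s j : ℝ) ^ s j) := by
  classical
  rcases Nat.eq_zero_or_pos n with hn0 | hn
  · subst hn0
    have hke : IsEmpty (Fin k) := ⟨fun j => by
      have h1 := hpos j
      have h2 : s j ≤ ∑ j', s j' :=
        Finset.single_le_sum (fun _ _ => Nat.zero_le _) (Finset.mem_univ j)
      omega⟩
    simp only [Finset.univ_eq_empty (α := Fin k), Finset.prod_empty, Nat.cast_one]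
    have : (∑ σ : Equiv.Perm (Fin 0), ∏ i, A i (σ i)) = 1 := by
      simp
    rw [this]
    norm_num
  · -- main case, n > 0
    have hn' : (0:ℝ) < n := by exact_mod_cast hn
    set F := univ.filter (fun f : Fin n → Fin k =>
        ∀ j, (univ.filter fun i => f i = j).card = s j) with hF
    set S := ∑ f ∈ F, ∏ i, B i (f i) with hS
    have hper : (∑ σ : Equiv.Perm (Fin n), ∏ i, A i (σ i))
        = ((∏ j, (s j).factorial : ℕ) : ℂ) * S := by
      rw [Finset.sum_congr rfl fun σ _ => Finset.prod_congr rfl fun i _ => hA i (σ i)]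
      exact per_group c s hc B
    -- set up root of unity
    set ζ : ℂ := Complex.exp (2 * Real.pi * Complex.I / ((n+1 : ℕ) : ℂ)) with hζdef
    have hζ : IsPrimitiveRoot ζ (n+1) := Complex.isPrimitiveRoot_exp (n+1) (Nat.succ_ne_zero n)
    have habsζ : ‖ζ‖ = 1 := by
      rw [hζdef, show (2 * (Real.pi:ℂ) * Complex.I / ((n+1:ℕ):ℂ))
          = ((2 * Real.pi / ((n:ℝ)+1) : ℝ) : ℂ) * Complex.I by push_cast; ring]
      exact Complex.norm_exp_ofReal_mul_I _
    set ρ : Fin k → ℝ := fun j => Real.sqrt (s j / n) with hρ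
    set r : Fin k → ℂ := fun j => ((ρ j : ℝ) : ℂ) with hr
    have hsle : ∀ j, s j ≤ n := fun j =>
      hsum ▸ Finset.single_le_sum (fun _ _ => Nat.zero_le _) (Finset.mem_univ j)
    have hfour := fourierIdent hζ s hsle B r
    -- bound each Fourier term
    have hterm : ∀ t : Fin k → Fin (n+1),
        ‖((∏ i, ∑ j, B i j * (r j * ζ ^ (t j : ℕ)))
          * ∏ j, (ζ ^ ((t j : ℕ) * s j))⁻¹)‖ ≤ Real.sqrt (((n:ℝ)⁻¹) ^ n) := by
      intro t
      rw [norm_mul]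
      have h2 : ‖(∏ j, (ζ ^ ((t j : ℕ) * s j))⁻¹)‖ = 1 := by
        rw [norm_prod]
        exact Finset.prod_eq_one fun j _ => by
          rw [norm_inv, norm_pow, habsζ, one_pow, inv_one]
      rw [h2, mul_one]
      have hx : ∑ j, ‖(r j * ζ ^ (t j : ℕ))‖ ^ 2 ≤ 1 := by
        have hxe : ∀ j, ‖(r j * ζ ^ (t j : ℕ))‖ ^ 2 = (s j : ℝ) / n := by
          intro j
          rw [norm_mul, norm_pow, habsζ, one_pow, mul_one, hr]
          rw [Complex.norm_real, Real.norm_eq_abs, abs_of_nonneg (Real.sqrt_nonneg _),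
            Real.sq_sqrt (by positivity)]
        rw [Finset.sum_congr rfl fun j _ => hxe j, ← Finset.sum_div]
        rw [show (∑ j, (s j : ℝ)) = (n : ℝ) by push_cast [← hsum]; ring]
        rw [div_self (ne_of_gt hn')]
      have hb := term_bound hn B hB (fun j => r j * ζ ^ (t j : ℕ)) hx
      have h0 : (0:ℝ) ≤ ‖(∏ i, ∑ j, B i j * (r j * ζ ^ (t j : ℕ)))‖ :=
        norm_nonneg _
      exact (Real.le_sqrt h0 (by positivity)).2 hb
    -- sum the bounds
    have hcard : (univ : Finset (Fin k → Fin (n+1))).card = (n+1) ^ k := by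
      simp [Finset.card_univ]
    have hsum_bound : ‖((((n+1:ℕ):ℂ)) ^ k * (∏ j, r j ^ s j) * S)‖
        ≤ ((n+1:ℕ):ℝ) ^ k * Real.sqrt (((n:ℝ)⁻¹) ^ n) := by
      rw [← hfour]
      calc ‖(∑ t : Fin k → Fin (n+1),
              (∏ i, ∑ j, B i j * (r j * ζ ^ (t j : ℕ))) * ∏ j, (ζ ^ ((t j : ℕ) * s j))⁻¹)‖
          ≤ ∑ t : Fin k → Fin (n+1), ‖
              ((∏ i, ∑ j, B i j * (r j * ζ ^ (t j : ℕ))) * ∏ j, (ζ ^ ((t j : ℕ) * s j))⁻¹)‖ :=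
            norm_sum_le _ _
        _ ≤ (univ : Finset (Fin k → Fin (n+1))).card • Real.sqrt (((n:ℝ)⁻¹) ^ n) :=
            Finset.sum_le_card_nsmul _ _ _ (fun t _ => hterm t)
        _ = ((n+1:ℕ):ℝ) ^ k * Real.sqrt (((n:ℝ)⁻¹) ^ n) := by
            rw [hcard, nsmul_eq_mul]
            push_cast
            ring
    -- extract the bound on |S|
    have habs_prod : ‖((((n+1:ℕ):ℂ)) ^ k * (∏ j, r j ^ s j) * S)‖
        = ((n+1:ℕ):ℝ) ^ k * (∏ j, ρ j ^ s j) * ‖S‖ := by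
      rw [norm_mul, norm_mul, norm_pow, norm_prod]
      congr 2
      · rw [Complex.norm_natCast]
      · exact Finset.prod_congr rfl fun j _ => by
          rw [norm_pow, hr, Complex.norm_real, Real.norm_eq_abs, abs_of_nonneg (Real.sqrt_nonneg _)]
    rw [habs_prod] at hsum_bound
    have hNk : (0:ℝ) < ((n+1:ℕ):ℝ) ^ k := by positivity
    have hkey : (∏ j, ρ j ^ s j) * ‖S‖ ≤ Real.sqrt (((n:ℝ)⁻¹) ^ n) := by
      have := hsum_bound
      rw [mul_assoc] at this
      exact le_of_mul_le_mul_left this hNk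
    -- square it
    have hsq : (∏ j, ((s j : ℝ) / n) ^ s j) * ‖S‖ ^ 2 ≤ ((n:ℝ)⁻¹) ^ n := by
      have h0 : (0:ℝ) ≤ (∏ j, ρ j ^ s j) * ‖S‖ :=
        mul_nonneg (Finset.prod_nonneg fun j _ => pow_nonneg (Real.sqrt_nonneg _) _)
          (norm_nonneg _)
      have := pow_le_pow_left₀ h0 hkey 2
      rw [Real.sq_sqrt (by positivity)] at this
      calc (∏ j, ((s j : ℝ) / n) ^ s j) * ‖S‖ ^ 2
          = ((∏ j, ρ j ^ s j) * ‖S‖) ^ 2 := by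
            rw [mul_pow, ← Finset.prod_pow]
            congr 1
            refine Finset.prod_congr rfl fun j _ => ?_
            rw [← pow_mul, mul_comm (s j) 2, pow_mul, hρ, Real.sq_sqrt (by positivity)]
        _ ≤ ((n:ℝ)⁻¹) ^ n := this
    -- rewrite the product of (s j / n) ^ s j
    have hprod_split : (∏ j, ((s j : ℝ) / n) ^ s j)
        = (∏ j, (s j : ℝ) ^ s j) * ((n:ℝ)⁻¹) ^ n := by
      calc (∏ j, ((s j : ℝ) / n) ^ s j)
          = ∏ j, ((s j : ℝ) ^ s j * ((n:ℝ)⁻¹) ^ s j) := by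
            refine Finset.prod_congr rfl fun j _ => ?_
            rw [div_eq_mul_inv, mul_pow]
        _ = (∏ j, (s j : ℝ) ^ s j) * ∏ j, ((n:ℝ)⁻¹) ^ s j := Finset.prod_mul_distrib
        _ = (∏ j, (s j : ℝ) ^ s j) * ((n:ℝ)⁻¹) ^ n := by
            rw [Finset.prod_pow_eq_pow_sum, hsum]
    have hinv : (0:ℝ) < ((n:ℝ)⁻¹) ^ n := by positivity
    have hSsq : (∏ j, (s j : ℝ) ^ s j) * ‖S‖ ^ 2 ≤ 1 := by
      rw [hprod_split] at hsq
      rw [show (∏ j, (s j : ℝ) ^ s j) * ((n:ℝ)⁻¹) ^ n * ‖S‖ ^ 2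
          = (((n:ℝ)⁻¹) ^ n) * ((∏ j, (s j : ℝ) ^ s j) * ‖S‖ ^ 2) by ring] at hsq
      nth_rewrite 2 [← mul_one (((n:ℝ)⁻¹) ^ n)] at hsq
      exact le_of_mul_le_mul_left hsq hinv
    -- conclude
    have hss : (0:ℝ) < ∏ j, (s j : ℝ) ^ s j := by
      refine Finset.prod_pos fun j _ => ?_
      have := hpos j
      positivity
    have hfac : (0:ℝ) < ((∏ j, (s j).factorial : ℕ) : ℝ) := by
      have : 0 < ∏ j, (s j).factorial := Finset.prod_pos fun j _ => (s j).factorial_pos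
      exact_mod_cast this
    rw [hper, norm_mul, Complex.norm_natCast]
    have hS2 : ‖S‖ ^ 2 ≤ (∏ j, (s j : ℝ) ^ s j)⁻¹ := by
      rw [← mul_le_mul_iff_of_pos_left hss, mul_inv_cancel₀ (ne_of_gt hss)]
      exact hSsq
    calc ((((∏ j, (s j).factorial : ℕ)) : ℝ) * ‖S‖) ^ 2
          / (((∏ j, (s j).factorial : ℕ)) : ℝ)
        = (((∏ j, (s j).factorial : ℕ)) : ℝ) * ‖S‖ ^ 2 := by
          field_simp
      _ ≤ (((∏ j, (s j).factorial : ℕ)) : ℝ) * (∏ j, (s j : ℝ) ^ s j)⁻¹ :=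
          mul_le_mul_of_nonneg_left hS2 (le_of_lt hfac)
      _ = (((∏ j, (s j).factorial : ℕ)) : ℝ) / ∏ j, (s j : ℝ) ^ s j := by
          rw [div_eq_mul_inv]
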